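/- arXiv:1902.00151 — 9 statements merged into one kernel-verified Lean document; each statement's English description precedes it below -/
import Mathlib

section
/- Let ρ > 0, n ≥ 1, w ∈ ℝⁿ with wᵢ > 0 for all i, and a ∈ ℝⁿ with aᵢ ≥ 0 for all i and a ≠ 0. Assume the ratios aᵢ/wᵢ are nonincreasing in i. For i = 1,…,n define sᵢ = Σ_{j=1}^{i} wⱼaⱼ, Lᵢ = Σ_{j=1}^{i} wⱼ², αᵢ = sᵢ/(1 + 2ρLᵢ), and let ᾱ = max_{1≤i≤n} αᵢ. Then the vector x* ∈ ℝⁿ with coordinates x*ᵢ = max(aᵢ − 2ρᾱwᵢ, 0) is the unique minimizer of f(x) = (1/2)‖x − a‖₂² + ρ(Σ_{i=1}^{n} wᵢxᵢ)² over the nonnegative orthant {x ∈ ℝⁿ : xᵢ ≥ 0 for all i}. -/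
theorem stmt0 (n : ℕ) (hn : 0 < n) (ρ : ℝ) (hρ : 0 < ρ)
    (w a : Fin n → ℝ) (hw : ∀ i, 0 < w i) (ha : ∀ i, 0 ≤ a i) (ha0 : a ≠ 0)
    (hmono : ∀ i j : Fin n, i ≤ j → a j / w j ≤ a i / w i)
    (α : Fin n → ℝ)
    (hα : ∀ i, α i = (∑ j ∈ Finset.Iic i, w j * a j) /
        (1 + 2 * ρ * ∑ j ∈ Finset.Iic i, (w j) ^ 2))
    (αbar : ℝ) (hαbar1 : ∃ k, αbar = α k) (hαbar2 : ∀ i, α i ≤ αbar)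
    (f : (Fin n → ℝ) → ℝ)
    (hf : ∀ x, f x = (1 / 2) * ∑ i, (x i - a i) ^ 2 + ρ * (∑ i, w i * x i) ^ 2)
    (xstar : Fin n → ℝ)
    (hxstar : ∀ i, xstar i = max (a i - 2 * ρ * αbar * w i) 0) :
    (∀ i, 0 ≤ xstar i) ∧
    (∀ x : Fin n → ℝ, (∀ i, 0 ≤ x i) → f xstar ≤ f x) ∧
    (∀ x : Fin n → ℝ, (∀ i, 0 ≤ x i) → f x = f xstar → x = xstar) := by
  obtain ⟨k, hk⟩ := hαbar1
  have hLnn : ∀ i : Fin n, (0:ℝ) ≤ ∑ j ∈ Finset.Iic i, (w j) ^ 2 :=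
    fun i => Finset.sum_nonneg fun j _ => sq_nonneg _
  have hDpos : ∀ i : Fin n, (0:ℝ) < 1 + 2 * ρ * ∑ j ∈ Finset.Iic i, (w j) ^ 2 := by
    intro i
    have := hLnn i
    nlinarith
  have hSnn : ∀ i : Fin n, (0:ℝ) ≤ ∑ j ∈ Finset.Iic i, w j * a j :=
    fun i => Finset.sum_nonneg fun j _ => mul_nonneg (hw j).le (ha j)
  have hαnn : 0 ≤ αbar := by
    rw [hk, hα]
    exact div_nonneg (hSnn k) (hDpos k).le
  have hSle : ∀ i : Fin n, (∑ j ∈ Finset.Iic i, w j * a j)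
      ≤ αbar * (1 + 2 * ρ * ∑ j ∈ Finset.Iic i, (w j) ^ 2) := by
    intro i
    have h1 := hαbar2 i
    rw [hα, div_le_iff₀ (hDpos i)] at h1
    linarith
  have hSk : (∑ j ∈ Finset.Iic k, w j * a j)
      = αbar * (1 + 2 * ρ * ∑ j ∈ Finset.Iic k, (w j) ^ 2) := by
    rw [hk, hα]
    field_simp
  -- sum over Iio k is bounded similarly
  have hprev : (∑ j ∈ Finset.Iio k, w j * a j)
      ≤ αbar * (1 + 2 * ρ * ∑ j ∈ Finset.Iio k, (w j) ^ 2) := by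
    rcases Finset.eq_empty_or_nonempty (Finset.Iio k) with h | h
    · simp [h]
      linarith
    · have heq : Finset.Iio k = Finset.Iic ((Finset.Iio k).max' h) := by
        ext j
        simp only [Finset.mem_Iio, Finset.mem_Iic]
        constructor
        · intro hj; exact Finset.le_max' _ j (Finset.mem_Iio.mpr hj)
        · intro hj; exact lt_of_le_of_lt hj (Finset.mem_Iio.mp ((Finset.Iio k).max'_mem h))
      rw [heq]; exact hSle _
  have hknm : k ∉ Finset.Iio k := by simp
  have hks : (∑ j ∈ Finset.Iic k, w j * a j)
      = w k * a k + ∑ j ∈ Finset.Iio k, w j * a j := by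
    rw [← Finset.Iio_insert, Finset.sum_insert hknm]
  have hkL : (∑ j ∈ Finset.Iic k, (w j) ^ 2)
      = (w k) ^ 2 + ∑ j ∈ Finset.Iio k, (w j) ^ 2 := by
    rw [← Finset.Iio_insert, Finset.sum_insert hknm]
  have hak : 2 * ρ * αbar * w k ≤ a k := by
    rw [hks, hkL] at hSk
    have h2 : (2 * ρ * αbar * w k) * w k ≤ a k * w k := by nlinarith [hSk, hprev]
    exact le_of_mul_le_mul_right h2 (hw k)
  have hleIic : ∀ i : Fin n, i ≤ k → 2 * ρ * αbar * w i ≤ a i := by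
    intro i hi
    have h1 := hmono i k hi
    have h2 : 2 * ρ * αbar ≤ a k / w k := by
      rw [le_div_iff₀ (hw k)]; linarith
    have h3 : 2 * ρ * αbar ≤ a i / w i := le_trans h2 h1
    rw [le_div_iff₀ (hw i)] at h3; linarith
  have hgt : ∀ i : Fin n, k < i → a i ≤ 2 * ρ * αbar * w i := by
    intro i hi
    have hsplit : Finset.Iic k ∪ Finset.Ioc k i = Finset.Iic i := by
      ext j
      simp only [Finset.mem_union, Finset.mem_Iic, Finset.mem_Ioc]
      constructor
      · rintro (h | ⟨_, h⟩)
        · exact le_trans h hi.le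
        · exact h
      · intro h
        rcases le_or_gt j k with h2 | h2
        · exact Or.inl h2
        · exact Or.inr ⟨h2, h⟩
    have hdisj : Disjoint (Finset.Iic k) (Finset.Ioc k i) := by
      apply Finset.disjoint_left.mpr
      intro j hj hj2
      exact absurd (Finset.mem_Ioc.mp hj2).1 (not_lt.mpr (Finset.mem_Iic.mp hj))
    have hSi : (∑ j ∈ Finset.Iic i, w j * a j)
        = (∑ j ∈ Finset.Iic k, w j * a j) + ∑ j ∈ Finset.Ioc k i, w j * a j := by
      rw [← hsplit, Finset.sum_union hdisj]
    have hLi : (∑ j ∈ Finset.Iic i, (w j) ^ 2)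
        = (∑ j ∈ Finset.Iic k, (w j) ^ 2) + ∑ j ∈ Finset.Ioc k i, (w j) ^ 2 := by
      rw [← hsplit, Finset.sum_union hdisj]
    have h1 := hSle i
    rw [hSi, hLi, hSk] at h1
    have h2 : (∑ j ∈ Finset.Ioc k i, w j * a j)
        ≤ 2 * ρ * αbar * ∑ j ∈ Finset.Ioc k i, (w j) ^ 2 := by
      nlinarith [h1]
    have h3 : (a i / w i) * (∑ j ∈ Finset.Ioc k i, (w j) ^ 2)
        ≤ ∑ j ∈ Finset.Ioc k i, w j * a j := by
      rw [Finset.mul_sum]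
      apply Finset.sum_le_sum
      intro j hj
      have hji : j ≤ i := (Finset.mem_Ioc.mp hj).2
      have hm := hmono j i hji
      rw [div_le_div_iff₀ (hw i) (hw j)] at hm
      rw [div_mul_eq_mul_div, div_le_iff₀ (hw i)]
      nlinarith [hw j, hw i]
    have hTpos : 0 < ∑ j ∈ Finset.Ioc k i, (w j) ^ 2 := by
      apply Finset.sum_pos' (fun j _ => sq_nonneg _)
      exact ⟨i, Finset.mem_Ioc.mpr ⟨hi, le_rfl⟩, pow_pos (hw i) 2⟩
    have h4 : a i / w i ≤ 2 * ρ * αbar := le_of_mul_le_mul_right (le_trans h3 h2) hTpos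
    rw [div_le_iff₀ (hw i)] at h4
    linarith
  have hx1 : ∀ i : Fin n, i ≤ k → xstar i = a i - 2 * ρ * αbar * w i := by
    intro i hi
    rw [hxstar]
    exact max_eq_left (by linarith [hleIic i hi])
  have hx2 : ∀ i : Fin n, k < i → xstar i = 0 := by
    intro i hi
    rw [hxstar]
    exact max_eq_right (by linarith [hgt i hi])
  have hxnn : ∀ i, 0 ≤ xstar i := fun i => by rw [hxstar]; exact le_max_right _ _
  -- the key sum identity
  have hsum : ∑ i, w i * xstar i = αbar := by
    have h1 : ∑ i, w i * xstar i = ∑ i ∈ Finset.Iic k, w i * xstar i := by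
      symm
      apply Finset.sum_subset (Finset.subset_univ _)
      intro i _ hi
      rw [hx2 i (by simpa using hi)]
      ring
    have h2 : ∑ i ∈ Finset.Iic k, w i * xstar i
        = (∑ j ∈ Finset.Iic k, w j * a j)
          - 2 * ρ * αbar * ∑ j ∈ Finset.Iic k, (w j) ^ 2 := by
      rw [Finset.mul_sum, ← Finset.sum_sub_distrib]
      apply Finset.sum_congr rfl
      intro i hi
      rw [hx1 i (Finset.mem_Iic.mp hi)]
      ring
    rw [h1, h2, hSk]; ring
  -- complementarity and nonnegativity of the gradient
  have hg_nn : ∀ i, 0 ≤ xstar i - a i + 2 * ρ * αbar * w i := by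
    intro i
    rw [hxstar]
    rcases le_total (a i - 2 * ρ * αbar * w i) 0 with h | h
    · rw [max_eq_right h]; linarith
    · rw [max_eq_left h]; linarith
  have hg_comp : ∀ i, (xstar i - a i + 2 * ρ * αbar * w i) * xstar i = 0 := by
    intro i
    rw [hxstar]
    rcases le_total (a i - 2 * ρ * αbar * w i) 0 with h | h
    · rw [max_eq_right h]; ring
    · rw [max_eq_left h]; ring
  -- key expansion
  have key : ∀ x : Fin n → ℝ,
      f x = f xstar + (∑ i, (xstar i - a i + 2 * ρ * αbar * w i) * (x i - xstar i))
        + (1 / 2) * (∑ i, (x i - xstar i) ^ 2)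
        + ρ * (∑ i, w i * (x i - xstar i)) ^ 2 := by
    intro x
    rw [hf, hf]
    have e1 : ∑ i, (x i - a i) ^ 2
        = ∑ i, ((xstar i - a i) ^ 2 + 2 * ((xstar i - a i) * (x i - xstar i))
            + (x i - xstar i) ^ 2) :=
      Finset.sum_congr rfl fun i _ => by ring
    have e2 : ∑ i, w i * x i = αbar + ∑ i, w i * (x i - xstar i) := by
      rw [← hsum, ← Finset.sum_add_distrib]
      exact Finset.sum_congr rfl fun i _ => by ring
    have e3 : ∑ i, (xstar i - a i + 2 * ρ * αbar * w i) * (x i - xstar i)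
        = (∑ i, (xstar i - a i) * (x i - xstar i))
          + 2 * ρ * αbar * ∑ i, w i * (x i - xstar i) := by
      rw [Finset.mul_sum, ← Finset.sum_add_distrib]
      exact Finset.sum_congr rfl fun i _ => by ring
    have e4 : ∑ i, 2 * ((xstar i - a i) * (x i - xstar i))
        = 2 * ∑ i, (xstar i - a i) * (x i - xstar i) := by
      rw [Finset.mul_sum]
    rw [e1, e2, e3, Finset.sum_add_distrib, Finset.sum_add_distrib, e4, hsum]
    ring
  have hgrad : ∀ x : Fin n → ℝ, (∀ i, 0 ≤ x i) →
      0 ≤ ∑ i, (xstar i - a i + 2 * ρ * αbar * w i) * (x i - xstar i) := by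
    intro x hx
    have e : ∀ i, (xstar i - a i + 2 * ρ * αbar * w i) * (x i - xstar i)
        = (xstar i - a i + 2 * ρ * αbar * w i) * x i := by
      intro i
      linear_combination -hg_comp i
    rw [Finset.sum_congr rfl fun i _ => e i]
    exact Finset.sum_nonneg fun i _ => mul_nonneg (hg_nn i) (hx i)
  refine ⟨hxnn, ?_, ?_⟩
  · intro x hx
    have h1 := hgrad x hx
    have h2 : 0 ≤ ∑ i, (x i - xstar i) ^ 2 :=
      Finset.sum_nonneg fun i _ => sq_nonneg _
    have h3 : 0 ≤ ρ * (∑ i, w i * (x i - xstar i)) ^ 2 :=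
      mul_nonneg hρ.le (sq_nonneg _)
    have := key x
    linarith
  · intro x hx hfx
    have h1 := hgrad x hx
    have h3 : 0 ≤ ρ * (∑ i, w i * (x i - xstar i)) ^ 2 :=
      mul_nonneg hρ.le (sq_nonneg _)
    have hA := key x
    have hzero : ∑ i, (x i - xstar i) ^ 2 = 0 := by
      have h2 : 0 ≤ ∑ i, (x i - xstar i) ^ 2 :=
        Finset.sum_nonneg fun i _ => sq_nonneg _
      linarith
    funext i
    have hz := (Finset.sum_eq_zero_iff_of_nonneg (fun i _ => sq_nonneg _)).mp hzero i
      (Finset.mem_univ i)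
    have : x i - xstar i = 0 := by
      nlinarith [hz, sq_nonneg (x i - xstar i)]
    linarith
end

section
/- Let ρ > 0, n ≥ 1, w ∈ ℝⁿ with wᵢ > 0 for all i, and a ∈ ℝⁿ with aᵢ ≥ 0 for all i, with the ratios aᵢ/wᵢ nonincreasing in i. Define sᵢ, Lᵢ, αᵢ as usual. Suppose k ∈ {1,…,n} satisfies a_k/w_k ≥ 2ρα_k, and either k = n or 2ρα_k > a_{k+1}/w_{k+1}. Then α_k ≥ αᵢ for every i ∈ {1,…,n}; that is, α_k = max_{1≤i≤n} αᵢ. -/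
private lemma stepA (ρ w a s αi αi' D : ℝ) (hρ : 0 < ρ) (hw : 0 < w) (hD : 0 < D)
    (h1 : αi * D = s) (h2 : αi' * (D + 2*ρ*w^2) = s + w*a)
    (h : 2*ρ*αi'*w ≤ a) : αi ≤ αi' := by
  nlinarith [mul_pos hw hD, mul_nonneg hw.le (sub_nonneg.mpr h)]

private lemma stepB (ρ w a s αi αi' D : ℝ) (hρ : 0 < ρ) (hw : 0 < w) (hD : 0 < D)
    (h1 : αi * D = s) (h2 : αi' * (D + 2*ρ*w^2) = s + w*a)
    (h : a ≤ 2*ρ*αi*w) :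
    αi' ≤ αi ∧ a ≤ 2*ρ*αi'*w := by
  have hD' : 0 < D + 2*ρ*w^2 := by positivity
  constructor
  · nlinarith [mul_pos hw hD', mul_nonneg hw.le (sub_nonneg.mpr h)]
  · have hkey : (2*ρ*αi'*w - a) * (D + 2*ρ*w^2) = D*(2*ρ*αi*w - a) := by
      linear_combination (2*ρ*w) * h2 - (2*ρ*w) * h1
    nlinarith [hkey, mul_nonneg hD.le (sub_nonneg.mpr h), hD']

theorem stmt1 (n : ℕ) (hn : 0 < n) (ρ : ℝ) (hρ : 0 < ρ)
    (w a : Fin n → ℝ) (hw : ∀ i, 0 < w i) (ha : ∀ i, 0 ≤ a i)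
    (hmono : ∀ i j : Fin n, i ≤ j → a j / w j ≤ a i / w i)
    (α : Fin n → ℝ)
    (hα : ∀ i, α i = (∑ j ∈ Finset.Iic i, w j * a j) /
        (1 + 2 * ρ * ∑ j ∈ Finset.Iic i, (w j) ^ 2))
    (k : Fin n)
    (hk1 : 2 * ρ * α k ≤ a k / w k)
    (hk2 : (k : ℕ) + 1 = n ∨
      ∃ h : (k : ℕ) + 1 < n, a ⟨(k : ℕ) + 1, h⟩ / w ⟨(k : ℕ) + 1, h⟩ < 2 * ρ * α k) :
    ∀ i, α i ≤ α k := by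
  set s : Fin n → ℝ := fun i => ∑ j ∈ Finset.Iic i, w j * a j with hs
  set L : Fin n → ℝ := fun i => ∑ j ∈ Finset.Iic i, (w j) ^ 2 with hL
  have hLpos : ∀ i, 0 < L i := by
    intro i
    apply Finset.sum_pos (fun j _ => pow_pos (hw j) 2) ⟨i, Finset.mem_Iic.mpr le_rfl⟩
  have hDpos : ∀ i, 0 < 1 + 2 * ρ * L i := fun i => by
    nlinarith [mul_pos hρ (hLpos i)]
  have hαD : ∀ i, α i * (1 + 2 * ρ * L i) = s i := by
    intro i
    rw [hα i]
    field_simp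
    simp only [hs, hL]; ring
  -- the insert lemma
  have hins : ∀ (i : Fin n) (h : (i : ℕ) + 1 < n),
      s ⟨(i:ℕ)+1, h⟩ = s i + w ⟨(i:ℕ)+1, h⟩ * a ⟨(i:ℕ)+1, h⟩ ∧
      L ⟨(i:ℕ)+1, h⟩ = L i + (w ⟨(i:ℕ)+1, h⟩)^2 := by
    intro i h
    have hset : Finset.Iic (⟨(i:ℕ)+1, h⟩ : Fin n) = insert ⟨(i:ℕ)+1, h⟩ (Finset.Iic i) := by
      ext j
      simp only [Finset.mem_Iic, Finset.mem_insert, Fin.le_def, Fin.ext_iff]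
      omega
    have hnotmem : (⟨(i:ℕ)+1, h⟩ : Fin n) ∉ Finset.Iic i := by
      simp [Finset.mem_Iic, Fin.le_def]
    constructor
    · simp only [hs, hset, Finset.sum_insert hnotmem]; ring
    · simp only [hL, hset, Finset.sum_insert hnotmem]; ring
  -- combined step lemmas specialized
  have key : ∀ (i : Fin n) (h : (i : ℕ) + 1 < n),
      (2*ρ*(α ⟨(i:ℕ)+1, h⟩)*(w ⟨(i:ℕ)+1, h⟩) ≤ a ⟨(i:ℕ)+1, h⟩ → α i ≤ α ⟨(i:ℕ)+1, h⟩) ∧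
      (a ⟨(i:ℕ)+1, h⟩ ≤ 2*ρ*(α i)*(w ⟨(i:ℕ)+1, h⟩) →
        α ⟨(i:ℕ)+1, h⟩ ≤ α i ∧ a ⟨(i:ℕ)+1, h⟩ ≤ 2*ρ*(α ⟨(i:ℕ)+1, h⟩)*(w ⟨(i:ℕ)+1, h⟩)) := by
    intro i h
    set i' : Fin n := ⟨(i:ℕ)+1, h⟩
    obtain ⟨hs', hL'⟩ := hins i h
    have h2 : α i' * ((1 + 2*ρ*L i) + 2*ρ*(w i')^2) = s i + w i' * a i' := by
      rw [← hs']
      have := hαD i'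
      rw [hL'] at this
      linarith [this]
    exact ⟨fun hh => stepA ρ (w i') (a i') (s i) (α i) (α i') (1+2*ρ*L i) hρ (hw i')
        (hDpos i) (hαD i) h2 hh,
      fun hh => stepB ρ (w i') (a i') (s i) (α i) (α i') (1+2*ρ*L i) hρ (hw i')
        (hDpos i) (hαD i) h2 hh⟩
  -- downward phase: for i ≤ k, α i ≤ α k
  have down : ∀ d : ℕ, ∀ i : Fin n, (i : ℕ) + d = (k : ℕ) → α i ≤ α k := by
    intro d
    induction d with
    | zero =>
      intro i hi
      have : i = k := Fin.ext (by omega)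
      rw [this]
    | succ d ih =>
      intro i hi
      have h1 : (i : ℕ) + 1 < n := by omega
      set i' : Fin n := ⟨(i:ℕ)+1, h1⟩
      have hik : α i' ≤ α k := ih i' (by simp [i']; omega)
      have hle : 2*ρ*(α i')*(w i') ≤ a i' := by
        have hmon : a k / w k ≤ a i' / w i' := hmono i' k (by simp [Fin.le_def, i']; omega)
        have : 2*ρ*(α i') ≤ a i' / w i' := by nlinarith
        calc 2*ρ*(α i')*(w i') ≤ (a i' / w i') * w i' := by
              nlinarith [hw i']
          _ = a i' := div_mul_cancel₀ _ (hw i').ne'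
      exact le_trans ((key i h1).1 hle) hik
  -- upward phase
  have up : ∀ d : ℕ, ∀ i : Fin n, (k : ℕ) + d = (i : ℕ) →
      α i ≤ α k ∧ ∀ h : (i : ℕ) + 1 < n, a ⟨(i:ℕ)+1, h⟩ ≤ 2*ρ*(α i)*(w ⟨(i:ℕ)+1, h⟩) := by
    intro d
    induction d with
    | zero =>
      intro i hi
      have hik : i = k := Fin.ext (by omega)
      subst hik
      refine ⟨le_rfl, fun h => ?_⟩
      rcases hk2 with h2 | ⟨h2, hlt⟩
      · omega
      · have : a ⟨(i:ℕ)+1, h⟩ / w ⟨(i:ℕ)+1, h⟩ < 2*ρ*α i := hlt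
        have hwpos := hw (⟨(i:ℕ)+1, h⟩ : Fin n)
        calc a ⟨(i:ℕ)+1, h⟩ = (a ⟨(i:ℕ)+1, h⟩ / w ⟨(i:ℕ)+1, h⟩) * w ⟨(i:ℕ)+1, h⟩ :=
              (div_mul_cancel₀ _ hwpos.ne').symm
          _ ≤ 2*ρ*(α i)*(w ⟨(i:ℕ)+1, h⟩) := by nlinarith
    | succ d ih =>
      intro i hi
      have h1 : (k : ℕ) + d < n := by omega
      set j : Fin n := ⟨(k:ℕ)+d, h1⟩ with hj
      have hj1 : (j : ℕ) + 1 < n := by simp [hj]; omega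
      have hii : i = ⟨(j:ℕ)+1, hj1⟩ := Fin.ext (by simp [hj]; omega)
      obtain ⟨hjk, hjnext⟩ := ih j rfl
      have hstep := (key j hj1).2 (by rw [← hii]; exact (hii ▸ hjnext hj1))
      rw [← hii] at hstep
      refine ⟨le_trans hstep.1 hjk, fun h => ?_⟩
      -- a_{i+1}/w_{i+1} ≤ a_i/w_i ≤ 2ρ α i
      have hwpos := hw (⟨(i:ℕ)+1, h⟩ : Fin n)
      have hwi := hw i
      have hmon : a ⟨(i:ℕ)+1, h⟩ / w ⟨(i:ℕ)+1, h⟩ ≤ a i / w i :=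
        hmono i ⟨(i:ℕ)+1, h⟩ (by simp [Fin.le_def])
      have hai : a i ≤ 2*ρ*(α i)*(w i) := by rw [hii]; exact hii ▸ hstep.2
      have h2 : a i / w i ≤ 2*ρ*(α i) := by
        rw [div_le_iff₀ hwi]; linarith [hai]
      calc a ⟨(i:ℕ)+1, h⟩ = (a ⟨(i:ℕ)+1, h⟩ / w ⟨(i:ℕ)+1, h⟩) * w ⟨(i:ℕ)+1, h⟩ :=
            (div_mul_cancel₀ _ hwpos.ne').symm
        _ ≤ 2*ρ*(α i)*(w ⟨(i:ℕ)+1, h⟩) := by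
            apply mul_le_mul_of_nonneg_right _ hwpos.le
            exact le_trans hmon h2
  intro i
  rcases le_or_gt (i : ℕ) (k : ℕ) with hik | hik
  · exact down ((k:ℕ) - (i:ℕ)) i (by omega)
  · exact (up ((i:ℕ) - (k:ℕ)) i (by omega)).1
end

section
/- Let ρ > 0, n ≥ 1, w ∈ ℝⁿ with wᵢ > 0 for all i, and a ∈ ℝⁿ with aᵢ ≥ 0 for all i and a ≠ 0, with the ratios aᵢ/wᵢ nonincreasing in i. Define sᵢ, Lᵢ, αᵢ and ᾱ = max_{1≤i≤n} αᵢ as usual. Then ᾱ is a fixed point of the map β ↦ Σ_{i=1}^{n} wᵢ·max(aᵢ − 2ρβwᵢ, 0); that is, ᾱ = Σ_{i=1}^{n} wᵢ (aᵢ − 2ρᾱwᵢ)⁺. -/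
theorem stmt2 (n : ℕ) (hn : 0 < n) (ρ : ℝ) (hρ : 0 < ρ)
    (w a : Fin n → ℝ) (hw : ∀ i, 0 < w i) (ha : ∀ i, 0 ≤ a i) (ha0 : a ≠ 0)
    (hmono : ∀ i j : Fin n, i ≤ j → a j / w j ≤ a i / w i)
    (α : Fin n → ℝ)
    (hα : ∀ i, α i = (∑ j ∈ Finset.Iic i, w j * a j) /
        (1 + 2 * ρ * ∑ j ∈ Finset.Iic i, (w j) ^ 2))
    (αbar : ℝ) (hαbar1 : ∃ k, αbar = α k) (hαbar2 : ∀ i, α i ≤ αbar) :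
    αbar = ∑ i, w i * max (a i - 2 * ρ * αbar * w i) 0 := by
  classical
  set S : Fin n → ℝ := fun i => ∑ j ∈ Finset.Iic i, w j * a j with hS
  set L : Fin n → ℝ := fun i => ∑ j ∈ Finset.Iic i, (w j) ^ 2 with hL
  have hLnn : ∀ i, (0:ℝ) ≤ L i := fun i => Finset.sum_nonneg (fun j _ => sq_nonneg _)
  have hLpos : ∀ i, (0:ℝ) < 1 + 2 * ρ * L i := by
    intro i; nlinarith [hLnn i]
  have hαS : ∀ i, α i * (1 + 2 * ρ * L i) = S i := by
    intro i
    rw [hα i]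
    field_simp
    exact mul_comm _ _
  -- recurrence lemma
  have hrec : ∀ i j : Fin n, (i : ℕ) + 1 = (j : ℕ) →
      (α j - α i) * (1 + 2 * ρ * L i) = w j * (a j - 2 * ρ * w j * α j) := by
    intro i j hij
    have hjne : j ∉ Finset.Iic i := by
      simp only [Finset.mem_Iic, Fin.le_def]; omega
    have hIic : Finset.Iic j = insert j (Finset.Iic i) := by
      ext x; simp only [Finset.mem_Iic, Finset.mem_insert, Fin.le_def, Fin.ext_iff]; omega
    have hSj : S j = w j * a j + S i := by
      simp [hS, hIic, Finset.sum_insert hjne]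
    have hLj : L j = (w j) ^ 2 + L i := by
      simp [hL, hIic, Finset.sum_insert hjne]
    have h1 := hαS i
    have h2 := hαS j
    rw [hSj, hLj] at h2
    nlinarith [h1, h2]
  -- largest maximizer
  set T : Finset (Fin n) := Finset.univ.filter (fun i => α i = αbar) with hT
  have hTne : T.Nonempty := by
    obtain ⟨k, hk⟩ := hαbar1
    exact ⟨k, by simp [hT, hk.symm]⟩
  set k := T.max' hTne with hkdef
  have hkα : α k = αbar := by
    have := T.max'_mem hTne
    simpa [hT] using this
  have hlt : ∀ i, k < i → α i < αbar := by
    intro i hi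
    rcases lt_or_eq_of_le (hαbar2 i) with h | h
    · exact h
    · exact absurd (Finset.le_max' T i (by simp [hT, h])) (not_le_of_gt hi)
  -- a k ≥ 2ρᾱ w k
  have hak : 2 * ρ * αbar * w k ≤ a k := by
    rcases Nat.eq_zero_or_eq_succ_pred (k : ℕ) with h0 | hsucc
    · -- k is the first index
      have hIic : Finset.Iic k = {k} := by
        ext x; simp only [Finset.mem_Iic, Finset.mem_singleton, Fin.le_def, Fin.ext_iff]; omega
      have hSk : S k = w k * a k := by simp [hS, hIic]
      have hLk : L k = (w k) ^ 2 := by simp [hL, hIic]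
      have h1 := hαS k
      rw [hSk, hLk, hkα] at h1
      have hwk := hw k
      have hank := ha k
      have hd : (0:ℝ) < 1 + 2 * ρ * w k ^ 2 := by positivity
      have h2 : (a k - 2 * ρ * αbar * w k) * (1 + 2 * ρ * w k ^ 2) = a k := by
        linear_combination (-(2 * ρ * w k)) * h1
      nlinarith [h2, hank, hd]
    · -- k has a predecessor
      have hklt : (k : ℕ) - 1 < n := by omega
      set k' : Fin n := ⟨(k : ℕ) - 1, hklt⟩ with hk'
      have hrk := hrec k' k (by simp [hk']; omega)
      have hle : α k' ≤ αbar := hαbar2 k'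
      have hpos := hLpos k'
      have hwk := hw k
      rw [hkα] at hrk
      nlinarith [hrk, hle, hpos, hwk]
  have hclaim1 : ∀ i : Fin n, i ≤ k → 2 * ρ * αbar * w i ≤ a i := by
    intro i hi
    have h1 : a k / w k ≤ a i / w i := hmono i k hi
    have h2 : 2 * ρ * αbar ≤ a k / w k := by
      rw [le_div_iff₀ (hw k)]; linarith [hak]
    have h3 : 2 * ρ * αbar ≤ a i / w i := le_trans h2 h1
    rw [le_div_iff₀ (hw i)] at h3
    linarith
  have hclaim2 : ∀ i : Fin n, k < i → a i ≤ 2 * ρ * αbar * w i := by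
    intro i hi
    have hik : (k : ℕ) + 1 < n := by
      have : (k : ℕ) < (i : ℕ) := hi
      omega
    set k1 : Fin n := ⟨(k : ℕ) + 1, hik⟩ with hk1
    have hkk1 : k < k1 := by simp [hk1, Fin.lt_def]
    have hrk := hrec k k1 (by simp [hk1])
    have hα1 : α k1 < αbar := hlt k1 hkk1
    have hpos := hLpos k
    have hwk1 := hw k1
    rw [hkα] at hrk
    have hak1 : a k1 < 2 * ρ * αbar * w k1 := by
      nlinarith [hrk, mul_pos hpos (sub_pos.mpr hα1),
        mul_pos (mul_pos (mul_pos hρ hwk1) hwk1) (sub_pos.mpr hα1), hwk1]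
    have h1 : a i / w i ≤ a k1 / w k1 := hmono k1 i (by simp [Fin.le_def, hk1]; omega)
    have h2 : a k1 / w k1 < 2 * ρ * αbar := by
      rw [div_lt_iff₀ (hw k1)]; linarith
    have h3 : a i / w i ≤ 2 * ρ * αbar := le_of_lt (lt_of_le_of_lt h1 h2)
    rw [div_le_iff₀ (hw i)] at h3
    linarith
  -- conclude
  have hterm : ∀ i : Fin n, w i * max (a i - 2 * ρ * αbar * w i) 0 =
      if i ≤ k then w i * (a i - 2 * ρ * αbar * w i) else 0 := by
    intro i
    split
    · next h => rw [max_eq_left (by linarith [hclaim1 i h])]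
    · next h =>
      rw [max_eq_right (by linarith [hclaim2 i (not_le.mp h)]), mul_zero]
  calc αbar = S k - 2 * ρ * αbar * L k := by
        have h1 := hαS k
        rw [hkα] at h1
        nlinarith [h1]
    _ = ∑ i ∈ Finset.Iic k, w i * (a i - 2 * ρ * αbar * w i) := by
        rw [hS, hL]
        rw [Finset.mul_sum, ← Finset.sum_sub_distrib]
        apply Finset.sum_congr rfl
        intro i _
        ring
    _ = ∑ i, (if i ≤ k then w i * (a i - 2 * ρ * αbar * w i) else 0) := by
        rw [← Finset.sum_filter]
        congr 1
        ext x; simp [Finset.mem_Iic]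
    _ = ∑ i, w i * max (a i - 2 * ρ * αbar * w i) 0 := by
        apply Finset.sum_congr rfl
        intro i _
        rw [hterm i]
end

section
/- Let ρ > 0, n ≥ 1, w ∈ ℝⁿ with wᵢ > 0 for all i, and a ∈ ℝⁿ with aᵢ ≥ 0 for all i. Then the unique minimizer x* over all of ℝⁿ of F_a(x) = (1/2)‖x − a‖₂² + ρ(Σ_{i=1}^{n} wᵢ|xᵢ|)² has all coordinates nonnegative; consequently x* coincides with the unique minimizer of F_a over the nonnegative orthant {x ∈ ℝⁿ : xᵢ ≥ 0 for all i}. -/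
theorem stmt3 (n : ℕ) (hn : 0 < n) (ρ : ℝ) (hρ : 0 < ρ)
    (w a : Fin n → ℝ) (hw : ∀ i, 0 < w i) (ha : ∀ i, 0 ≤ a i)
    (F : (Fin n → ℝ) → ℝ)
    (hF : ∀ x, F x = (1 / 2) * ∑ i, (x i - a i) ^ 2 + ρ * (∑ i, w i * |x i|) ^ 2)
    (xstar : Fin n → ℝ)
    (hmin : ∀ x, F xstar ≤ F x)
    (huniq : ∀ x, F x = F xstar → x = xstar) :
    (∀ i, 0 ≤ xstar i) ∧
    (∀ x : Fin n → ℝ, (∀ i, 0 ≤ x i) → F xstar ≤ F x) ∧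
    (∀ x : Fin n → ℝ, (∀ i, 0 ≤ x i) → F x = F xstar → x = xstar) := by
  have key : ∀ i, 0 ≤ xstar i := by
    set y : Fin n → ℝ := fun i => |xstar i| with hy
    have hFy : F y ≤ F xstar := by
      rw [hF, hF]
      have h2 : (∑ i, w i * |y i|) = ∑ i, w i * |xstar i| := by
        apply Finset.sum_congr rfl
        intro i _
        simp [hy, abs_abs]
      rw [h2]
      apply add_le_add_left
      apply mul_le_mul_of_nonneg_left _ (by norm_num)
      apply Finset.sum_le_sum
      intro i _
      have := ha i
      have habs : (|xstar i| - a i) ^ 2 ≤ (xstar i - a i) ^ 2 := by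
        have h1 : |xstar i| ^ 2 = xstar i ^ 2 := sq_abs _
        have h2 : xstar i ≤ |xstar i| := le_abs_self _
        nlinarith
      exact habs
    have heq : F y = F xstar := le_antisymm hFy (hmin y)
    have := huniq y heq
    intro i
    have : y i = xstar i := congrFun this i
    rw [hy] at this
    simp only at this
    rw [← this]
    exact abs_nonneg _
  exact ⟨key, fun x _ => hmin x, fun x _ h => huniq x h⟩
end

section
/- Let n ≥ 1, ρ > 0, w ∈ ℝⁿ, and let Σ ∈ ℝ^{n×n} be a diagonal matrix whose diagonal entries all belong to {0, 1}. Set ŵ = Σw, A = Σ + 2ρ ŵŵᵀ, and M = Σ − (2ρ/(1 + 2ρ ŵᵀŵ)) ŵŵᵀ. Then M is the Moore–Penrose pseudoinverse of A; that is, AMA = A, MAM = M, (AM)ᵀ = AM, and (MA)ᵀ = MA. -/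
open Matrix

theorem stmt6 (n : ℕ) (hn : 0 < n) (ρ : ℝ) (hρ : 0 < ρ)
    (w d : Fin n → ℝ) (hd : ∀ i, d i = 0 ∨ d i = 1)
    (S : Matrix (Fin n) (Fin n) ℝ) (hS : S = Matrix.diagonal d)
    (what : Fin n → ℝ) (hwhat : what = S.mulVec w)
    (A M : Matrix (Fin n) (Fin n) ℝ)
    (hA : A = S + (2 * ρ) • Matrix.vecMulVec what what)
    (hM : M = S - (2 * ρ / (1 + 2 * ρ * ∑ i, what i ^ 2)) • Matrix.vecMulVec what what) :
    A * M * A = A ∧ M * A * M = M ∧ (A * M)ᵀ = A * M ∧ (M * A)ᵀ = M * A := by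
  set V : Matrix (Fin n) (Fin n) ℝ := Matrix.vecMulVec what what with hV
  set c : ℝ := ∑ i, what i ^ 2 with hcdef
  set a : ℝ := 2 * ρ with ha
  set b : ℝ := a / (1 + a * c) with hbdef
  have hd2 : ∀ i, d i * d i = d i := fun i => by rcases hd i with h | h <;> simp [h]
  have hwhat' : ∀ i, what i = d i * w i := by
    intro i; simp [hwhat, hS, Matrix.mulVec_diagonal]
  have hdw : ∀ i, d i * what i = what i := by
    intro i; rw [hwhat' i, ← mul_assoc, hd2]
  have hc : (0:ℝ) < 1 + a * c := by
    have : (0:ℝ) ≤ c := Finset.sum_nonneg fun i _ => sq_nonneg _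
    nlinarith
  have hb : b * (1 + a * c) = a := div_mul_cancel₀ _ (ne_of_gt hc)
  have key : a - b - a * b * c = 0 := by nlinarith [hb]
  have hSS : S * S = S := by
    rw [hS, Matrix.diagonal_mul_diagonal]
    exact congrArg Matrix.diagonal (funext hd2)
  have hST : Sᵀ = S := by rw [hS, Matrix.diagonal_transpose]
  have hVT : Vᵀ = V := by
    ext i j; simp [hV, Matrix.vecMulVec_apply, mul_comm]
  have hSV : S * V = V := by
    ext i j
    rw [hS, Matrix.diagonal_mul]
    simp only [hV, Matrix.vecMulVec_apply]
    rw [← mul_assoc, hdw]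
  have hVS : V * S = V := by
    ext i j
    rw [hS, Matrix.mul_diagonal]
    simp only [hV, Matrix.vecMulVec_apply]
    rw [mul_assoc, mul_comm (what j), hdw]
  have hVV : V * V = c • V := by
    ext i j
    simp only [hV, Matrix.mul_apply, Matrix.vecMulVec_apply, Matrix.smul_apply, smul_eq_mul,
      hcdef]
    rw [Finset.sum_mul]
    apply Finset.sum_congr rfl
    intros; ring
  have hAM : A * M = S := by
    rw [hA, hM]
    rw [Matrix.add_mul, Matrix.mul_sub, Matrix.mul_sub, Matrix.smul_mul, Matrix.smul_mul,
      Matrix.mul_smul, Matrix.mul_smul, hSS, hSV, hVS, hVV]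
    match_scalars <;> linarith [key]
  have hMA : M * A = S := by
    rw [hA, hM]
    rw [Matrix.sub_mul, Matrix.mul_add, Matrix.mul_add, Matrix.smul_mul, Matrix.smul_mul,
      Matrix.mul_smul, Matrix.mul_smul, hSS, hSV, hVS, hVV]
    match_scalars <;> linarith [key]
  have hSA : S * A = A := by
    rw [hA, Matrix.mul_add, Matrix.mul_smul, hSS, hSV]
  have hSM : S * M = M := by
    rw [hM, Matrix.mul_sub, Matrix.mul_smul, hSS, hSV]
  refine ⟨?_, ?_, ?_, ?_⟩
  · rw [hAM, hSA]
  · rw [hMA, hSM]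
  · rw [hAM, hST]
  · rw [hMA, hST]
end

section
/- Let n ≥ 1, ρ > 0, w ∈ ℝⁿ, and let Σ ∈ ℝ^{n×n} be a diagonal matrix whose diagonal entries all belong to {0, 1}. Set ŵ = Σw and M = Σ − (2ρ/(1 + 2ρ ŵᵀŵ)) ŵŵᵀ. Then M is symmetric positive semidefinite and I − M is positive semidefinite; that is, 0 ≤ xᵀMx ≤ xᵀx for all x ∈ ℝⁿ. -/
open Matrix

theorem stmt7 (n : ℕ) (hn : 0 < n) (ρ : ℝ) (hρ : 0 < ρ)
    (w d : Fin n → ℝ) (hd : ∀ i, d i = 0 ∨ d i = 1)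
    (S : Matrix (Fin n) (Fin n) ℝ) (hS : S = Matrix.diagonal d)
    (what : Fin n → ℝ) (hwhat : what = S.mulVec w)
    (M : Matrix (Fin n) (Fin n) ℝ)
    (hM : M = S - (2 * ρ / (1 + 2 * ρ * ∑ i, what i ^ 2)) • Matrix.vecMulVec what what) :
    Mᵀ = M ∧ ∀ x : Fin n → ℝ,
      0 ≤ dotProduct x (M.mulVec x) ∧
      dotProduct x (M.mulVec x) ≤ dotProduct x x := by
  set s : ℝ := ∑ i, what i ^ 2 with hs_def
  have hs : 0 ≤ s := Finset.sum_nonneg fun i _ => sq_nonneg _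
  have hden : 0 < 1 + 2 * ρ * s := by positivity
  set c : ℝ := 2 * ρ / (1 + 2 * ρ * s) with hc_def
  have hc : 0 ≤ c := by positivity
  have hcs : c * s ≤ 1 := by
    rw [hc_def, div_mul_eq_mul_div, div_le_one hden]; nlinarith
  have hdw : ∀ i, d i * what i = what i := by
    intro i
    rcases hd i with h | h
    · simp [hwhat, hS, h, mulVec_diagonal]
    · simp [h]
  -- quadratic form formula
  have key : ∀ x : Fin n → ℝ, dotProduct x (M.mulVec x)
      = (∑ i, d i * x i ^ 2) - c * (∑ i, what i * x i) ^ 2 := by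
    intro x
    have hMx : ∀ i, M.mulVec x i = d i * x i - c * what i * (∑ j, what j * x j) := by
      intro i
      simp only [hM, hS, sub_mulVec, Pi.sub_apply, smul_mulVec, Pi.smul_apply,
        mulVec_diagonal, smul_eq_mul]
      congr 1
      simp only [mulVec, dotProduct, vecMulVec_apply]
      rw [Finset.mul_sum, Finset.mul_sum]
      apply Finset.sum_congr rfl
      intro j _
      ring
    simp only [dotProduct, hMx]
    rw [Finset.sum_congr rfl (fun i _ => by ring :
      ∀ i ∈ Finset.univ, x i * (d i * x i - c * what i * (∑ j, what j * x j))
        = d i * x i ^ 2 - c * (∑ j, what j * x j) * (what i * x i))]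
    rw [Finset.sum_sub_distrib, ← Finset.mul_sum]
    ring
  constructor
  · rw [hM, transpose_sub, transpose_smul]
    congr 1
    · rw [hS, diagonal_transpose]
    · congr 1
      ext i j
      simp [vecMulVec_apply, mul_comm]
  · intro x
    have hdx : 0 ≤ ∑ i, d i * x i ^ 2 := by
      apply Finset.sum_nonneg
      intro i _
      rcases hd i with h | h <;> simp [h, sq_nonneg]
    have hcs2 : (∑ i, what i * x i) ^ 2 ≤ s * (∑ i, d i * x i ^ 2) := by
      have h1 : (∑ i, what i * x i) = ∑ i, what i * (d i * x i) := by
        apply Finset.sum_congr rfl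
        intro i _
        rw [← mul_assoc, mul_comm (what i) (d i), hdw]
      have h2 := Finset.sum_mul_sq_le_sq_mul_sq Finset.univ what (fun i => d i * x i)
      have h3 : ∑ i, (d i * x i) ^ 2 = ∑ i, d i * x i ^ 2 := by
        apply Finset.sum_congr rfl
        intro i _
        rcases hd i with h | h <;> simp [h] <;> ring
      rw [h1]
      calc (∑ i, what i * (d i * x i)) ^ 2
          ≤ (∑ i, what i ^ 2) * ∑ i, (d i * x i) ^ 2 := h2
        _ = s * (∑ i, d i * x i ^ 2) := by rw [h3]
    constructor
    · rw [key x]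
      have : c * (∑ i, what i * x i) ^ 2 ≤ c * (s * (∑ i, d i * x i ^ 2)) :=
        mul_le_mul_of_nonneg_left hcs2 hc
      nlinarith
    · rw [key x]
      have h4 : (∑ i, d i * x i ^ 2) ≤ dotProduct x x := by
        rw [dotProduct]
        apply Finset.sum_le_sum
        intro i _
        rcases hd i with h | h <;> simp [h] <;> nlinarith [sq_nonneg (x i)]
      nlinarith [sq_nonneg (∑ i, what i * x i)]
end

section
/- Let A : ℝⁿ → ℝᵐ be a linear map, c ∈ ℝⁿ, let h : ℝᵐ → ℝ be convex and differentiable, and let p : ℝⁿ → ℝ be convex. Define f(x) = h(Ax) − ⟨c, x⟩ + p(x) and the proximal residual R(x) = x − Prox_p(x − A*∇h(Ax) + c). If y ∈ ℝⁿ is a subgradient of f at x, i.e., f(z) ≥ f(x) + ⟨y, z − x⟩ for all z ∈ ℝⁿ, then ‖R(x)‖₂ ≤ ‖y‖₂. -/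
set_option maxHeartbeats 1000000 in
theorem stmt10 (n m : ℕ)
    (A : EuclideanSpace ℝ (Fin n) →L[ℝ] EuclideanSpace ℝ (Fin m))
    (c : EuclideanSpace ℝ (Fin n))
    (h : EuclideanSpace ℝ (Fin m) → ℝ) (hconv : ConvexOn ℝ Set.univ h)
    (h' : EuclideanSpace ℝ (Fin m) → EuclideanSpace ℝ (Fin m))
    (hdiff : ∀ y, HasGradientAt h (h' y) y)
    (p : EuclideanSpace ℝ (Fin n) → ℝ) (hp : ConvexOn ℝ Set.univ p)
    (f : EuclideanSpace ℝ (Fin n) → ℝ)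
    (hf : ∀ x, f x = h (A x) - (inner ℝ c x : ℝ) + p x)
    (x y : EuclideanSpace ℝ (Fin n))
    (hsub : ∀ z, f x + (inner ℝ y (z - x) : ℝ) ≤ f z)
    (q : EuclideanSpace ℝ (Fin n))
    (hq : ∀ z, p q + (1 / 2) * ‖q - (x - (ContinuousLinearMap.adjoint A) (h' (A x)) + c)‖ ^ 2 ≤
      p z + (1 / 2) * ‖z - (x - (ContinuousLinearMap.adjoint A) (h' (A x)) + c)‖ ^ 2) :
    ‖x - q‖ ≤ ‖y‖ := by
  classical
  set g : EuclideanSpace ℝ (Fin m) := h' (A x) with hg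
  set u : EuclideanSpace ℝ (Fin n) := x - (ContinuousLinearMap.adjoint A) g + c with hu
  set v : EuclideanSpace ℝ (Fin m) := A (q - x) with hv
  set w : EuclideanSpace ℝ (Fin n) := x - q with hw
  -- Step 1: subgradient inequality from hsub, via directional derivative of h
  have key1 : (inner ℝ y (q - x) : ℝ) + (inner ℝ c (q - x) : ℝ) + (p x - p q) ≤
      (inner ℝ g v : ℝ) := by
    have hline : ∀ t ∈ Set.Ioc (0:ℝ) 1,
        (inner ℝ y (q - x) : ℝ) + (inner ℝ c (q - x) : ℝ) + (p x - p q) ≤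
          (h (A x + t • v) - h (A x)) / t := by
      intro t ht
      have ht0 : (0:ℝ) < t := ht.1
      have hpt : p (x + t • (q - x)) ≤ (1 - t) * p x + t * p q := by
        have := hp.2 (Set.mem_univ x) (Set.mem_univ q)
          (by have := ht.2; linarith : (0:ℝ) ≤ 1 - t) (le_of_lt ht0) (by ring)
        have hpt' : (1 - t) • x + t • q = x + t • (q - x) := by
          simp [smul_sub, sub_smul]; abel
        rwa [hpt'] at this
      have hAx : A (x + t • (q - x)) = A x + t • v := by
        simp [hv, map_add, map_smul]
      have hs := hsub (x + t • (q - x))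
      rw [hf x, hf (x + t • (q - x)), hAx] at hs
      have hxx : x + t • (q - x) - x = t • (q - x) := by abel
      have hinn1 : (inner ℝ y (x + t • (q - x) - x) : ℝ) = t * (inner ℝ y (q - x) : ℝ) := by
        rw [hxx, real_inner_smul_right]
      have hinn2 : (inner ℝ c (x + t • (q - x)) : ℝ) =
          (inner ℝ c x : ℝ) + t * (inner ℝ c (q - x) : ℝ) := by
        rw [inner_add_right, real_inner_smul_right]
      rw [hinn1, hinn2] at hs
      rw [le_div_iff₀ ht0]
      nlinarith [hs, hpt]
    -- directional derivative of h at A x in direction v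
    have hd : HasDerivAt (fun t : ℝ => h (A x + t • v)) ((inner ℝ g v : ℝ)) 0 := by
      have hF : HasFDerivAt h ((InnerProductSpace.toDual ℝ _) g) (A x) :=
        (hdiff (A x)).hasFDerivAt
      have hl : HasDerivAt (fun t : ℝ => A x + t • v) v 0 := by
        simpa using ((hasDerivAt_id (0:ℝ)).smul_const v).const_add (A x)
      have hF' : HasFDerivAt h ((InnerProductSpace.toDual ℝ _) g) ((0:ℝ) • v + A x) := by
        simpa using hF
      have := hF'.comp_hasDerivAt (x := (0:ℝ))
        (by simpa using ((hasDerivAt_id (0:ℝ)).smul_const v).add_const (A x) :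
          HasDerivAt (fun t : ℝ => t • v + A x) v 0)
      simp [InnerProductSpace.toDual_apply_apply, add_comm] at this
      exact this
    have hslope : Filter.Tendsto (fun t : ℝ => (h (A x + t • v) - h (A x)) / t)
        (nhdsWithin 0 (Set.Ioi 0)) (nhds ((inner ℝ g v : ℝ))) := by
      have h1 := hasDerivAt_iff_tendsto_slope.mp hd
      have h2 : Filter.Tendsto (slope (fun t : ℝ => h (A x + t • v)) 0)
          (nhdsWithin 0 (Set.Ioi 0)) (nhds ((inner ℝ g v : ℝ))) :=
        h1.mono_left (nhdsWithin_mono _ (fun t ht => ne_of_gt ht))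
      refine h2.congr' ?_
      filter_upwards [self_mem_nhdsWithin] with t ht
      simp [slope_def_field]
    refine ge_of_tendsto hslope ?_
    filter_upwards [Ioc_mem_nhdsGT_of_mem (Set.left_mem_Ico.2 one_pos)] with t ht
    exact hline t ht
  -- Step 2: prox subgradient inequality at x
  have key2 : (inner ℝ (u - q) w : ℝ) ≤ p x - p q := by
    have hline : ∀ t ∈ Set.Ioc (0:ℝ) 1,
        (inner ℝ (u - q) w : ℝ) ≤ p x - p q + t / 2 * ‖w‖ ^ 2 := by
      intro t ht
      have ht0 : (0:ℝ) < t := ht.1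
      have hpt : p (q + t • w) ≤ (1 - t) * p q + t * p x := by
        have := hp.2 (Set.mem_univ q) (Set.mem_univ x)
          (by have := ht.2; linarith : (0:ℝ) ≤ 1 - t) (le_of_lt ht0) (by ring)
        have hpt' : (1 - t) • q + t • x = q + t • w := by
          simp [hw, smul_sub, sub_smul]; abel
        rwa [hpt'] at this
      have hqt := hq (q + t • w)
      have hnorm : ‖q + t • w - u‖ ^ 2 =
          ‖q - u‖ ^ 2 + 2 * (t * (inner ℝ (q - u) w : ℝ)) + t ^ 2 * ‖w‖ ^ 2 := by
        have : q + t • w - u = (q - u) + t • w := by abel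
        rw [this, norm_add_sq_real, real_inner_smul_right, norm_smul, Real.norm_eq_abs,
          mul_pow, sq_abs]
      rw [hnorm] at hqt
      have hinn : (inner ℝ (u - q) w : ℝ) = -(inner ℝ (q - u) w : ℝ) := by
        rw [← inner_neg_left]; congr 1; abel
      rw [hinn]
      nlinarith [hqt, hpt]
    have htend : Filter.Tendsto (fun t : ℝ => p x - p q + t / 2 * ‖w‖ ^ 2)
        (nhdsWithin 0 (Set.Ioi 0)) (nhds (p x - p q)) := by
      have hc : Continuous (fun t : ℝ => p x - p q + t / 2 * ‖w‖ ^ 2) :=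
        continuous_const.add ((continuous_id.div_const 2).mul continuous_const)
      have := (hc.tendsto 0).mono_left (nhdsWithin_le_nhds (s := Set.Ioi (0:ℝ)))
      convert this using 2
      ring
    refine ge_of_tendsto htend ?_
    filter_upwards [Ioc_mem_nhdsGT_of_mem (Set.left_mem_Ico.2 one_pos)] with t ht
    exact hline t ht
  -- Step 3: combine
  have hadj : (inner ℝ g v : ℝ) = (inner ℝ ((ContinuousLinearMap.adjoint A) g) (q - x) : ℝ) := by
    rw [hv, ContinuousLinearMap.adjoint_inner_left]
  have husplit : u - q = w + (c - (ContinuousLinearMap.adjoint A) g) := by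
    rw [hu, hw]; abel
  have hkey : ‖w‖ ^ 2 ≤ (inner ℝ y w : ℝ) := by
    have e1 : (inner ℝ (u - q) w : ℝ) =
        ‖w‖ ^ 2 + (inner ℝ (c - (ContinuousLinearMap.adjoint A) g) w : ℝ) := by
      rw [husplit, inner_add_left, real_inner_self_eq_norm_sq]
    have e2 : (inner ℝ ((ContinuousLinearMap.adjoint A) g) (q - x) : ℝ) =
        -(inner ℝ ((ContinuousLinearMap.adjoint A) g) w : ℝ) := by
      rw [← inner_neg_right]; congr 1; rw [hw]; abel
    have e3 : (inner ℝ y (q - x) : ℝ) = -(inner ℝ y w : ℝ) := by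
      rw [← inner_neg_right]; congr 1; rw [hw]; abel
    have e4 : (inner ℝ c (q - x) : ℝ) = -(inner ℝ c w : ℝ) := by
      rw [← inner_neg_right]; congr 1; rw [hw]; abel
    have e5 : (inner ℝ (c - (ContinuousLinearMap.adjoint A) g) w : ℝ) =
        (inner ℝ c w : ℝ) - (inner ℝ ((ContinuousLinearMap.adjoint A) g) w : ℝ) := by
      rw [inner_sub_left]
    rw [hadj, e2, e3, e4] at key1
    rw [e1, e5] at key2
    linarith
  have hcs : (inner ℝ y w : ℝ) ≤ ‖y‖ * ‖w‖ := real_inner_le_norm y w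
  have hwnn : (0:ℝ) ≤ ‖w‖ := norm_nonneg w
  have hynn : (0:ℝ) ≤ ‖y‖ := norm_nonneg y
  nlinarith [hkey, hcs, hwnn, hynn]
end

section
/- Let A : ℝⁿ → ℝᵐ be a linear map, c ∈ ℝⁿ, x̃ ∈ ℝⁿ, σ > 0, let p : ℝⁿ → ℝ be convex, and let h* : ℝᵐ → ℝ be strongly convex with modulus α > 0 (i.e., h* − (α/2)‖·‖₂² is convex). Define φ(u) = −h*(u) − (1/(2σ))‖x̃ + σc − σA*u‖₂² + (1/σ) E_{σp}(x̃ + σc − σA*u) for u ∈ ℝᵐ, where E_{σp} is the Moreau envelope of σp. Then φ is strongly concave with modulus α; that is, −φ − (α/2)‖·‖₂² is convex, and consequently φ has a unique maximizer over ℝᵐ. -/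
open Set

lemma aux_exists_unique_min {F : Type*} [NormedAddCommGroup F]
    [InnerProductSpace ℝ F] [FiniteDimensional ℝ F]
    {f : F → ℝ} {α : ℝ} (hα : 0 < α)
    (hc : ConvexOn ℝ Set.univ (fun x => f x - α / 2 * ‖x‖ ^ 2)) :
    ∃! u : F, ∀ v, f u ≤ f v := by
  set c : F → ℝ := fun x => f x - α / 2 * ‖x‖ ^ 2 with hcdef
  have hccont : Continuous c := by
    have := hc.continuousOn isOpen_univ
    rwa [← continuousOn_univ]
  have hfc : ∀ x, f x = c x + α / 2 * ‖x‖ ^ 2 := fun x => by simp [hcdef]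
  have hfcont : Continuous f := by
    have : Continuous (fun x : F => c x + α / 2 * ‖x‖ ^ 2) := by fun_prop
    exact this.congr fun x => (hfc x).symm
  clear_value c
  obtain ⟨M, hM⟩ := (isCompact_sphere (0 : F) 1).exists_bound_of_continuousOn
    hccont.continuousOn
  obtain ⟨B, hBdef⟩ : ∃ B : ℝ, B = |M| + |c 0| := ⟨_, rfl⟩
  have hcoer : ∀ x : F, 1 ≤ ‖x‖ → α / 2 * ‖x‖ ^ 2 - ‖x‖ * B ≤ f x := by
    intro x hx
    have hxpos : (0:ℝ) < ‖x‖ := lt_of_lt_of_le one_pos hx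
    set t : ℝ := ‖x‖⁻¹ with htdef
    have ht0 : 0 ≤ t := by positivity
    have ht1 : t ≤ 1 := by rw [htdef]; exact inv_le_one_of_one_le₀ hx
    have hxt : ‖x‖ * t = 1 := mul_inv_cancel₀ hxpos.ne'
    have hsphere : t • x ∈ Metric.sphere (0 : F) 1 := by
      simp [htdef, norm_smul, abs_of_pos (inv_pos.mpr hxpos),
        inv_mul_cancel₀ hxpos.ne']
    have hMx : |c (t • x)| ≤ M := by
      have := hM _ hsphere; rwa [Real.norm_eq_abs] at this
    have hb0 : (0:ℝ) ≤ 1 - t := by linarith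
    have hab : t + (1 - t) = 1 := by ring
    have hconv := hc.2 (mem_univ x) (mem_univ (0 : F)) ht0 hb0 hab
    simp only [smul_zero, add_zero, smul_eq_mul] at hconv
    have hneg : -M ≤ c (t • x) := (abs_le.mp hMx).1
    have h1 : -M - (1 - t) * c 0 ≤ t * c x := by linarith
    have h2 : ‖x‖ * (-M - (1 - t) * c 0) ≤ ‖x‖ * (t * c x) :=
      mul_le_mul_of_nonneg_left h1 (norm_nonneg x)
    have h3 : ‖x‖ * (t * c x) = c x := by
      rw [← mul_assoc, hxt, one_mul]
    have h4 : ‖x‖ * (-M - (1 - t) * c 0) = ‖x‖ * (-M) - (‖x‖ - 1) * c 0 := by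
      linear_combination (c 0) * hxt
    have hcx : ‖x‖ * (-M) - (‖x‖ - 1) * c 0 ≤ c x := by
      rw [← h3, ← h4]; exact h2
    have hM0mul : ‖x‖ * (-|M|) ≤ ‖x‖ * (-M) :=
      mul_le_mul_of_nonneg_left (by linarith [le_abs_self M]) (norm_nonneg x)
    have habs : -(‖x‖ * |c 0|) ≤ -(‖x‖ - 1) * c 0 := by
      nlinarith [abs_nonneg (c 0), le_abs_self (c 0), neg_abs_le (c 0)]
    have hBmul : ‖x‖ * B = ‖x‖ * |M| + ‖x‖ * |c 0| := by rw [hBdef]; ring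
    rw [hfc x]
    nlinarith
  set R : ℝ := max 1 (2 / α * (B + |f 0| + 1)) with hRdef
  have hR1 : 1 ≤ R := le_max_left _ _
  have hR2 : 2 / α * (B + |f 0| + 1) ≤ R := le_max_right _ _
  have hout : ∀ x : F, R < ‖x‖ → f 0 < f x := by
    intro x hx
    have hx1 : 1 ≤ ‖x‖ := le_trans hR1 hx.le
    have h := hcoer x hx1
    have hxR : R ≤ ‖x‖ := hx.le
    have hαR : B + |f 0| + 1 ≤ α / 2 * R := by
      have hα2 : 0 < α / 2 := by positivity
      calc B + |f 0| + 1 = α / 2 * (2 / α * (B + |f 0| + 1)) := by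
            field_simp
        _ ≤ α / 2 * R := by nlinarith
    have e1 : α / 2 * R ≤ α / 2 * ‖x‖ := by nlinarith
    have e2 : ‖x‖ * (α / 2 * R - B) ≤ ‖x‖ * (α / 2 * ‖x‖ - B) :=
      mul_le_mul_of_nonneg_left (by linarith) (norm_nonneg x)
    have e3 : ‖x‖ * (|f 0| + 1) ≤ ‖x‖ * (α / 2 * R - B) :=
      mul_le_mul_of_nonneg_left (by linarith) (norm_nonneg x)
    have e4 : 1 * (|f 0| + 1) ≤ ‖x‖ * (|f 0| + 1) :=
      mul_le_mul_of_nonneg_right hx1 (by positivity)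
    have e5 : α / 2 * ‖x‖ ^ 2 - ‖x‖ * B = ‖x‖ * (α / 2 * ‖x‖ - B) := by ring
    have := le_abs_self (f 0)
    linarith
  obtain ⟨u, huball, humin⟩ := (isCompact_closedBall (0:F) R).exists_isMinOn
    ⟨0, by simp; linarith⟩ hfcont.continuousOn
  have hglobal : ∀ v, f u ≤ f v := by
    intro v
    by_cases hv : v ∈ Metric.closedBall (0:F) R
    · exact humin hv
    · have : R < ‖v‖ := by
        simpa [Metric.mem_closedBall, dist_zero_right, not_le] using hv
      have h0 : f u ≤ f 0 := humin (by simp; linarith)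
      linarith [hout v this]
  have hstrict : StrictConvexOn ℝ (Set.univ : Set F) f :=
    (strongConvexOn_iff_convex.mpr (hcdef ▸ hc)).strictConvexOn hα
  refine ⟨u, hglobal, fun u' hu' => ?_⟩
  exact hstrict.eq_of_isMinOn (isMinOn_iff.mpr fun x _ => hu' x)
    (isMinOn_iff.mpr fun x _ => hglobal x) (mem_univ _) (mem_univ _)
lemma aux_moreau_convex (n : ℕ) (σ : ℝ)
    (p : EuclideanSpace ℝ (Fin n) → ℝ)
    (E : EuclideanSpace ℝ (Fin n) → ℝ)
    (hE : ∀ v, (∃ y, E v = σ * p y + (1 / 2) * ‖y - v‖ ^ 2) ∧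
      ∀ y, E v ≤ σ * p y + (1 / 2) * ‖y - v‖ ^ 2) :
    ConvexOn ℝ Set.univ (fun v : EuclideanSpace ℝ (Fin n) =>
      (1/2) * ‖v‖ ^ 2 - E v) := by
  refine ⟨convex_univ, ?_⟩
  intro v₁ _ v₂ _ a b ha hb hab
  set v := a • v₁ + b • v₂ with hv
  obtain ⟨y, hy⟩ := (hE v).1
  have h₁ := (hE v₁).2 y
  have h₂ := (hE v₂).2 y
  have k0 : ‖y - v‖ ^ 2 = ‖y‖ ^ 2 - 2 * (inner ℝ y v : ℝ) + ‖v‖ ^ 2 :=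
    norm_sub_sq_real y v
  have k1 : ‖y - v₁‖ ^ 2 = ‖y‖ ^ 2 - 2 * (inner ℝ y v₁ : ℝ) + ‖v₁‖ ^ 2 :=
    norm_sub_sq_real y v₁
  have k2 : ‖y - v₂‖ ^ 2 = ‖y‖ ^ 2 - 2 * (inner ℝ y v₂ : ℝ) + ‖v₂‖ ^ 2 :=
    norm_sub_sq_real y v₂
  have k3 : (inner ℝ y v : ℝ) = a * inner ℝ y v₁ + b * inner ℝ y v₂ := by
    rw [hv, inner_add_right, real_inner_smul_right, real_inner_smul_right]
  have hXv : (1/2) * ‖v‖ ^ 2 - E v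
      = (inner ℝ y v : ℝ) - (1/2) * ‖y‖ ^ 2 - σ * p y := by
    rw [hy]; linarith [k0]
  have hX₁ : (inner ℝ y v₁ : ℝ) - (1/2) * ‖y‖ ^ 2 - σ * p y
      ≤ (1/2) * ‖v₁‖ ^ 2 - E v₁ := by linarith [k1]
  have hX₂ : (inner ℝ y v₂ : ℝ) - (1/2) * ‖y‖ ^ 2 - σ * p y
      ≤ (1/2) * ‖v₂‖ ^ 2 - E v₂ := by linarith [k2]
  have m₁ := mul_le_mul_of_nonneg_left hX₁ ha
  have m₂ := mul_le_mul_of_nonneg_left hX₂ hb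
  have s1 : a * ((1/2) * ‖y‖ ^ 2 + σ * p y) + b * ((1/2) * ‖y‖ ^ 2 + σ * p y)
      = (1/2) * ‖y‖ ^ 2 + σ * p y := by
    linear_combination ((1/2) * ‖y‖ ^ 2 + σ * p y) * hab
  simp only [smul_eq_mul]
  linarith [m₁, m₂, k3, s1]

theorem stmt14 (n m : ℕ)
    (A : EuclideanSpace ℝ (Fin n) →L[ℝ] EuclideanSpace ℝ (Fin m))
    (c xt : EuclideanSpace ℝ (Fin n)) (σ : ℝ) (hσ : 0 < σ)
    (p : EuclideanSpace ℝ (Fin n) → ℝ) (hp : ConvexOn ℝ Set.univ p)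
    (hstar : EuclideanSpace ℝ (Fin m) → ℝ) (α : ℝ) (hα : 0 < α)
    (hstrong : ConvexOn ℝ Set.univ
      (fun u : EuclideanSpace ℝ (Fin m) => hstar u - (α / 2) * ‖u‖ ^ 2))
    (E : EuclideanSpace ℝ (Fin n) → ℝ)
    (hE : ∀ v, (∃ y, E v = σ * p y + (1 / 2) * ‖y - v‖ ^ 2) ∧
      ∀ y, E v ≤ σ * p y + (1 / 2) * ‖y - v‖ ^ 2)
    (φ : EuclideanSpace ℝ (Fin m) → ℝ)
    (hφ : ∀ u, φ u = -hstar u -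
        (1 / (2 * σ)) * ‖xt + σ • c - σ • (ContinuousLinearMap.adjoint A) u‖ ^ 2 +
        (1 / σ) * E (xt + σ • c - σ • (ContinuousLinearMap.adjoint A) u)) :
    ConvexOn ℝ Set.univ
      (fun u : EuclideanSpace ℝ (Fin m) => -φ u - (α / 2) * ‖u‖ ^ 2) ∧
    ∃! u : EuclideanSpace ℝ (Fin m), ∀ v, φ v ≤ φ u := by
  have hg := aux_moreau_convex n σ p E hE
  -- affinity of the inner map
  have hw : ∀ (a b : ℝ), a + b = 1 → ∀ u₁ u₂ : EuclideanSpace ℝ (Fin m),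
      xt + σ • c - σ • (ContinuousLinearMap.adjoint A) (a • u₁ + b • u₂)
        = a • (xt + σ • c - σ • (ContinuousLinearMap.adjoint A) u₁)
          + b • (xt + σ • c - σ • (ContinuousLinearMap.adjoint A) u₂) := by
    intro a b hab u₁ u₂
    have hb : b = 1 - a := by linarith
    subst hb
    simp only [map_add, map_smul]
    module
  have h2 : ConvexOn ℝ Set.univ (fun u : EuclideanSpace ℝ (Fin m) =>
      (1/σ) * ((1/2) * ‖xt + σ • c - σ • (ContinuousLinearMap.adjoint A) u‖ ^ 2
        - E (xt + σ • c - σ • (ContinuousLinearMap.adjoint A) u))) := by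
    refine ⟨convex_univ, ?_⟩
    intro u₁ _ u₂ _ a b ha hb hab
    simp only [smul_eq_mul]
    rw [hw a b hab u₁ u₂]
    have hkey := hg.2 (Set.mem_univ
        (xt + σ • c - σ • (ContinuousLinearMap.adjoint A) u₁))
      (Set.mem_univ (xt + σ • c - σ • (ContinuousLinearMap.adjoint A) u₂))
      ha hb hab
    simp only [smul_eq_mul] at hkey
    have hσ' : (0:ℝ) ≤ 1/σ := by positivity
    nlinarith [mul_le_mul_of_nonneg_left hkey hσ']
  have hsum := hstrong.add h2
  have hfun : (fun u : EuclideanSpace ℝ (Fin m) => -φ u - (α / 2) * ‖u‖ ^ 2)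
      = (fun u : EuclideanSpace ℝ (Fin m) => hstar u - (α / 2) * ‖u‖ ^ 2)
        + fun u => (1/σ) * ((1/2) * ‖xt + σ • c
            - σ • (ContinuousLinearMap.adjoint A) u‖ ^ 2
          - E (xt + σ • c - σ • (ContinuousLinearMap.adjoint A) u)) := by
    funext u
    simp only [Pi.add_apply, hφ u]
    field_simp
    ring
  have hconv : ConvexOn ℝ Set.univ
      (fun u : EuclideanSpace ℝ (Fin m) => -φ u - (α / 2) * ‖u‖ ^ 2) := by
    rw [hfun]; exact hsum
  refine ⟨hconv, ?_⟩
  have hc : ConvexOn ℝ Set.univ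
      (fun u : EuclideanSpace ℝ (Fin m) => (fun x => -φ x) u - α / 2 * ‖u‖ ^ 2) := by
    convert hconv using 2
  obtain ⟨u, hu, huniq⟩ := aux_exists_unique_min hα hc
  refine ⟨u, fun v => by linarith [hu v], fun u' hu' => ?_⟩
  exact huniq u' fun v => by linarith [hu' v]
end

section
/- Let A ∈ ℝ^{m×n}, b ∈ {−1, 1}ᵐ, λ > 0, let G = {g₁,…,g_l} be a partition of {1,…,n}, and let w ∈ ℝⁿ have strictly positive entries. Define f(x) = Σ_{i=1}^{m} log(1 + exp(−bᵢ (Ax)ᵢ)) + λ Σ_{i=1}^{l} ‖w_{gᵢ} ∘ x_{gᵢ}‖₁². Then the set Ω of global minimizers of f over ℝⁿ is nonempty and compact. -/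
theorem stmt15 (m n l : ℕ) (A : Matrix (Fin m) (Fin n) ℝ) (b : Fin m → ℝ)
    (hb : ∀ i, b i = 1 ∨ b i = -1) (lam : ℝ) (hlam : 0 < lam)
    (g : Fin n → Fin l) (hg : Function.Surjective g)
    (w : Fin n → ℝ) (hw : ∀ j, 0 < w j)
    (f : EuclideanSpace ℝ (Fin n) → ℝ)
    (hf : ∀ x, f x = (∑ i, Real.log (1 + Real.exp (-(b i * A.mulVec x i)))) +
      lam * ∑ k : Fin l, (∑ j ∈ Finset.univ.filter (fun j => g j = k), w j * |x j|) ^ 2) :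
    {x : EuclideanSpace ℝ (Fin n) | ∀ z, f x ≤ f z}.Nonempty ∧
      IsCompact {x : EuclideanSpace ℝ (Fin n) | ∀ z, f x ≤ f z} := by
  rcases Nat.eq_zero_or_pos n with hn | hn
  · subst hn
    have hsub : Subsingleton (EuclideanSpace ℝ (Fin 0)) :=
      ⟨fun a c => by ext i; exact i.elim0⟩
    refine ⟨⟨0, fun z => ?_⟩, ?_⟩
    · rw [hsub.elim z 0]
    · haveI := hsub
      haveI : Finite (EuclideanSpace ℝ (Fin 0)) := Finite.of_subsingleton
      exact (Set.toFinite _).isCompact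
  -- main case
  have hne : (Finset.univ : Finset (Fin n)).Nonempty := ⟨⟨0, hn⟩, Finset.mem_univ _⟩
  set wmin : ℝ := Finset.univ.inf' hne w with hwmin
  have hwminpos : 0 < wmin := by
    obtain ⟨j, _, hj⟩ := Finset.exists_mem_eq_inf' hne w
    rw [hwmin, hj]; exact hw j
  set c : ℝ := lam * wmin ^ 2 with hc
  have hcpos : 0 < c := by positivity
  -- lower bound
  have key : ∀ x : EuclideanSpace ℝ (Fin n), c * ‖x‖ ^ 2 ≤ f x := by
    intro x
    rw [hf x]
    have h1 : (0:ℝ) ≤ ∑ i, Real.log (1 + Real.exp (-(b i * A.mulVec x i))) := by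
      apply Finset.sum_nonneg
      intro i _
      apply Real.log_nonneg
      nlinarith [Real.exp_pos (-(b i * A.mulVec x i))]
    have h2 : c * ‖x‖ ^ 2 ≤ lam * ∑ k : Fin l,
        (∑ j ∈ Finset.univ.filter (fun j => g j = k), w j * |x j|) ^ 2 := by
      rw [hc, mul_assoc]
      apply mul_le_mul_of_nonneg_left _ hlam.le
      have hnorm : ‖x‖ ^ 2 = ∑ j, x j ^ 2 := by
        rw [EuclideanSpace.norm_eq]
        rw [Real.sq_sqrt (by positivity)]
        congr 1; ext j; rw [Real.norm_eq_abs, sq_abs]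
      rw [hnorm, Finset.mul_sum]
      calc ∑ j, wmin ^ 2 * x j ^ 2
          ≤ ∑ j, (w j * |x j|) ^ 2 := by
            apply Finset.sum_le_sum
            intro j _
            have h1 : wmin ≤ w j := Finset.inf'_le w (Finset.mem_univ j)
            have := abs_nonneg (x j)
            have : (wmin * |x j|) ^ 2 ≤ (w j * |x j|) ^ 2 := by
              apply pow_le_pow_left₀ (by positivity) (by nlinarith)
            calc wmin ^ 2 * x j ^ 2 = (wmin * |x j|) ^ 2 := by
                  rw [mul_pow, sq_abs]
              _ ≤ (w j * |x j|) ^ 2 := this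
        _ = ∑ k : Fin l, ∑ j ∈ Finset.univ.filter (fun j => g j = k),
              (w j * |x j|) ^ 2 := (Finset.sum_fiberwise Finset.univ g fun j => (w j * |x j|) ^ 2).symm
        _ ≤ ∑ k : Fin l, (∑ j ∈ Finset.univ.filter (fun j => g j = k), w j * |x j|) ^ 2 := by
            apply Finset.sum_le_sum
            intro k _
            exact Finset.sum_sq_le_sq_sum_of_nonneg fun j _ => mul_nonneg (hw j).le (abs_nonneg _)
    linarith
  -- continuity
  have hcont : Continuous f := by
    have : f = fun x : EuclideanSpace ℝ (Fin n) =>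
        (∑ i, Real.log (1 + Real.exp (-(b i * A.mulVec x i)))) +
        lam * ∑ k : Fin l, (∑ j ∈ Finset.univ.filter (fun j => g j = k), w j * |x j|) ^ 2 :=
      funext hf
    rw [this]
    have hcoord : ∀ j : Fin n, Continuous fun x : EuclideanSpace ℝ (Fin n) => x j :=
      fun j => (EuclideanSpace.proj j).continuous
    apply Continuous.add
    · apply continuous_finset_sum
      intro i _
      apply Continuous.log
      · apply Continuous.add continuous_const
        apply Real.continuous_exp.comp
        apply Continuous.neg
        apply Continuous.mul continuous_const
        simp only [Matrix.mulVec, dotProduct]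
        exact continuous_finset_sum _ fun j _ => (continuous_const.mul (hcoord j))
      · intro x; positivity
    · apply Continuous.mul continuous_const
      apply continuous_finset_sum
      intro k _
      exact (continuous_finset_sum _ fun j _ =>
        continuous_const.mul (hcoord j).abs).pow 2
  -- coercivity
  have hcoer : Filter.Tendsto f (Filter.cocompact _) Filter.atTop := by
    apply Filter.tendsto_atTop_mono
      (fun x => key x)
    have h1 : Filter.Tendsto (fun r : ℝ => c * r ^ 2) Filter.atTop Filter.atTop :=
      (Filter.tendsto_pow_atTop (two_ne_zero)).const_mul_atTop hcpos
    exact h1.comp (tendsto_norm_cocompact_atTop)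
  obtain ⟨x0, hx0⟩ := hcont.exists_forall_le hcoer
  refine ⟨⟨x0, hx0⟩, ?_⟩
  apply Metric.isCompact_of_isClosed_isBounded
  · have : {x : EuclideanSpace ℝ (Fin n) | ∀ z, f x ≤ f z} =
        ⋂ z, {x | f x ≤ f z} := by ext x; simp
    rw [this]
    exact isClosed_iInter fun z => isClosed_le hcont continuous_const
  · apply (Metric.isBounded_closedBall
      (x := (0 : EuclideanSpace ℝ (Fin n))) (r := Real.sqrt (f x0 / c))).subset
    intro x hx
    have h1 : c * ‖x‖ ^ 2 ≤ f x0 := le_trans (key x) (hx x0)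
    have h2 : ‖x‖ ^ 2 ≤ f x0 / c := by
      rw [le_div_iff₀ hcpos]; linarith
    have h3 : ‖x‖ ≤ Real.sqrt (f x0 / c) := by
      rw [← Real.sqrt_sq (norm_nonneg x)]
      exact Real.sqrt_le_sqrt h2
    simpa [Metric.mem_closedBall, dist_eq_norm] using h3
end
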